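/- Let d, n be positive integers, X, Δ ∈ ℝ^{d×n}, V a symmetric positive definite d×d matrix, r ≥ 0 with Δ Δᵀ ⪯ r V⁻¹ in the Loewner order, and P an n×n symmetric positive semidefinite matrix. Then for any μ ≥ r + (1 + r) ‖X‖ ‖V‖^{1/2}, we have −μ ‖P‖_* V⁻¹ ⪯ (X + Δ) P (X + Δ)ᵀ − X P Xᵀ ⪯ μ ‖P‖_* V⁻¹. -/

import Mathlib

open Matrix

/-- The operator (spectral) norm of a real matrix: the norm of the induced linear map
between Euclidean spaces, `‖A‖ = max_{‖x‖ ≤ 1} ‖A x‖`. -/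
noncomputable def opNorm {m n : Type*} [Fintype m] [Fintype n] [DecidableEq n]
    (A : Matrix m n ℝ) : ℝ :=
  ‖LinearMap.toContinuousLinearMap (Matrix.toEuclideanLin A)‖

namespace Stmt8Aux
open Matrix

variable {m p : Type*} [Fintype m] [Fintype p] [DecidableEq m] [DecidableEq p]

lemma dot_self_nonneg (x : m → ℝ) : 0 ≤ x ⬝ᵥ x :=
  Finset.sum_nonneg fun i _ => mul_self_nonneg (x i)

lemma psd_smul {M : Matrix m m ℝ} (hM : M.PosSemidef) {c : ℝ} (hc : 0 ≤ c) :
    (c • M).PosSemidef := by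
  refine PosSemidef.of_dotProduct_mulVec_nonneg ?_ (fun x => ?_)
  · show (c • M)ᴴ = c • M
    rw [conjTranspose_smul, hM.1.eq]
    simp
  · rw [smul_mulVec, dotProduct_smul, smul_eq_mul]
    exact mul_nonneg hc (hM.dotProduct_mulVec_nonneg x)

lemma cs_dot (x y : m → ℝ) : (x ⬝ᵥ y) ^ 2 ≤ (x ⬝ᵥ x) * (y ⬝ᵥ y) := by
  simpa [dotProduct, sq] using Finset.sum_mul_sq_le_sq_mul_sq Finset.univ x y

lemma keynorm {k : Type*} [Fintype k] (v : k → ℝ) :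
    ‖(WithLp.equiv 2 (k → ℝ)).symm v‖ ^ 2 = v ⬝ᵥ v := by
  rw [EuclideanSpace.norm_eq]
  rw [Real.sq_sqrt (by positivity)]
  simp [dotProduct, sq, Real.norm_eq_abs, abs_mul_abs_self]

lemma dot_mulVec_le (A : Matrix m p ℝ) (x : p → ℝ) :
    (A *ᵥ x) ⬝ᵥ (A *ᵥ x) ≤ opNorm A ^ 2 * (x ⬝ᵥ x) := by
  have h1 : ‖LinearMap.toContinuousLinearMap (Matrix.toEuclideanLin A)
      ((WithLp.equiv 2 (p → ℝ)).symm x)‖ ≤ opNorm A * ‖(WithLp.equiv 2 (p → ℝ)).symm x‖ :=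
    ContinuousLinearMap.le_opNorm _ _
  have h2 : LinearMap.toContinuousLinearMap (Matrix.toEuclideanLin A)
      ((WithLp.equiv 2 (p → ℝ)).symm x) = (WithLp.equiv 2 (m → ℝ)).symm (A *ᵥ x) := by
    simp [Matrix.toEuclideanLin_apply_piLp_toLp]
  have h3 := pow_le_pow_left₀ (norm_nonneg _) h1 2
  rw [h2, keynorm (A *ᵥ x), mul_pow, keynorm x] at h3
  exact h3

lemma dot_mulVec_conjTranspose_le (A : Matrix m p ℝ) (x : m → ℝ) :
    (Aᴴ *ᵥ x) ⬝ᵥ (Aᴴ *ᵥ x) ≤ opNorm A ^ 2 * (x ⬝ᵥ x) := by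
  set u : p → ℝ := Aᴴ *ᵥ x with hu
  have h0 : x ⬝ᵥ (A *ᵥ u) = u ⬝ᵥ u := by
    rw [dotProduct_mulVec]
    congr 1
    rw [hu, conjTranspose_eq_transpose_of_trivial, mulVec_transpose]
  have hCS := cs_dot x (A *ᵥ u)
  have hAu := dot_mulVec_le A u
  have key : (u ⬝ᵥ u) ^ 2 ≤ (opNorm A ^ 2 * (x ⬝ᵥ x)) * (u ⬝ᵥ u) := by
    calc (u ⬝ᵥ u) ^ 2 = (x ⬝ᵥ (A *ᵥ u)) ^ 2 := by rw [← h0]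
      _ ≤ (x ⬝ᵥ x) * ((A *ᵥ u) ⬝ᵥ (A *ᵥ u)) := hCS
      _ ≤ (x ⬝ᵥ x) * (opNorm A ^ 2 * (u ⬝ᵥ u)) := by
          exact mul_le_mul_of_nonneg_left hAu (dot_self_nonneg x)
      _ = (opNorm A ^ 2 * (x ⬝ᵥ x)) * (u ⬝ᵥ u) := by ring
  rcases (dot_self_nonneg u).eq_or_lt with h | h
  · rw [← h]
    exact mul_nonneg (sq_nonneg _) (dot_self_nonneg x)
  · nlinarith [key, h]

lemma dot_quad_eq {M : Matrix m m ℝ} (x : m → ℝ) :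
    star x ⬝ᵥ (M *ᵥ x) = x ⬝ᵥ (M *ᵥ x) := by simp

lemma psd_of_quad {M : Matrix m m ℝ} (hH : M.IsHermitian)
    (h : ∀ x : m → ℝ, 0 ≤ x ⬝ᵥ (M *ᵥ x)) : M.PosSemidef :=
  PosSemidef.of_dotProduct_mulVec_nonneg hH fun x => by rw [dot_quad_eq]; exact h x

lemma psd_opNorm_sq_smul_one_sub (A : Matrix m p ℝ) :
    ((opNorm A ^ 2) • (1 : Matrix m m ℝ) - A * Aᴴ).PosSemidef := by
  refine psd_of_quad ?_ ?_
  · show _ = _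
    simp [conjTranspose_sub, conjTranspose_smul, conjTranspose_mul]
  · intro x
    have h1 : x ⬝ᵥ ((A * Aᴴ) *ᵥ x) = (Aᴴ *ᵥ x) ⬝ᵥ (Aᴴ *ᵥ x) := by
      rw [← mulVec_mulVec, dotProduct_mulVec]
      congr 1
      rw [conjTranspose_eq_transpose_of_trivial, mulVec_transpose]
    rw [sub_mulVec, dotProduct_sub, smul_mulVec, one_mulVec, dotProduct_smul,
      smul_eq_mul, h1]
    have := dot_mulVec_conjTranspose_le A x
    linarith

lemma psd_opNorm_smul_one_sub {M : Matrix m m ℝ} (hM : M.IsHermitian) :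
    ((opNorm M) • (1 : Matrix m m ℝ) - M).PosSemidef := by
  refine psd_of_quad ?_ ?_
  · show _ = _
    have hMt : Mᵀ = M := by rw [← conjTranspose_eq_transpose_of_trivial, hM.eq]
    simp [conjTranspose_sub, conjTranspose_smul, hMt]
  · intro x
    rw [sub_mulVec, dotProduct_sub, smul_mulVec, one_mulVec, dotProduct_smul, smul_eq_mul]
    have hCS := cs_dot x (M *ᵥ x)
    have hMx := dot_mulVec_le M x
    have key : (x ⬝ᵥ (M *ᵥ x)) ^ 2 ≤ (opNorm M * (x ⬝ᵥ x)) ^ 2 := by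
      calc (x ⬝ᵥ (M *ᵥ x)) ^ 2 ≤ (x ⬝ᵥ x) * ((M *ᵥ x) ⬝ᵥ (M *ᵥ x)) := hCS
        _ ≤ (x ⬝ᵥ x) * (opNorm M ^ 2 * (x ⬝ᵥ x)) :=
            mul_le_mul_of_nonneg_left hMx (dot_self_nonneg x)
        _ = (opNorm M * (x ⬝ᵥ x)) ^ 2 := by ring
    have h2 : x ⬝ᵥ (M *ᵥ x) ≤ opNorm M * (x ⬝ᵥ x) := by
      have hb : 0 ≤ opNorm M * (x ⬝ᵥ x) :=
        mul_nonneg (norm_nonneg _) (dot_self_nonneg x)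
      nlinarith [key]
    linarith

open scoped MatrixOrder in
lemma exists_sqrt {M : Matrix m m ℝ} (hM : M.PosSemidef) : ∃ S : Matrix m m ℝ, Sᴴ = S ∧ S * S = M :=
  ⟨CFC.sqrt M, (CFC.sqrt_nonneg M).posSemidef.1, CFC.sqrt_mul_sqrt_self M hM.nonneg⟩

lemma psd_trace_smul_one_sub {P : Matrix p p ℝ} (hP : P.PosSemidef) :
    (P.trace • (1 : Matrix p p ℝ) - P).PosSemidef := by
  refine psd_of_quad ?_ ?_
  · show _ = _
    have hPt : Pᵀ = P := by rw [← conjTranspose_eq_transpose_of_trivial, hP.1.eq]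
    simp [conjTranspose_sub, conjTranspose_smul, hPt]
  · intro x
    rw [sub_mulVec, dotProduct_sub, smul_mulVec, one_mulVec, dotProduct_smul, smul_eq_mul]
    obtain ⟨B, hBH', hBB⟩ := exists_sqrt hP
    have hBH : Bᵀ = B := by
      rw [← conjTranspose_eq_transpose_of_trivial, hBH']
    have h1 : x ⬝ᵥ (P *ᵥ x) = (B *ᵥ x) ⬝ᵥ (B *ᵥ x) := by
      rw [← hBB, ← mulVec_mulVec, dotProduct_mulVec]
      congr 1
      conv_rhs => rw [← hBH]
      rw [mulVec_transpose]
    have htr : P.trace = ∑ i, ∑ j, B i j ^ 2 := by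
      rw [← hBB]
      simp only [Matrix.trace, Matrix.diag, Matrix.mul_apply]
      congr 1
      ext i
      congr 1
      ext j
      rw [sq]
      congr 1
      conv_lhs => rw [← hBH]
      rfl
    have hcs : ∀ i, (∑ j, B i j * x j) ^ 2 ≤ (∑ j, B i j ^ 2) * (∑ j, x j ^ 2) := fun i =>
      Finset.sum_mul_sq_le_sq_mul_sq Finset.univ _ _
    have h2 : (B *ᵥ x) ⬝ᵥ (B *ᵥ x) ≤ (∑ i, ∑ j, B i j ^ 2) * (x ⬝ᵥ x) := by
      have hxx : x ⬝ᵥ x = ∑ j, x j ^ 2 := by simp [dotProduct, sq]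
      simp only [dotProduct, Matrix.mulVec, hxx, ← sq]
      rw [Finset.sum_mul]
      exact Finset.sum_le_sum fun i _ => hcs i
    rw [h1, htr]
    linarith

lemma psd_congr {M : Matrix p p ℝ} (hM : M.PosSemidef) (A : Matrix m p ℝ) :
    (A * M * Aᴴ).PosSemidef := hM.mul_mul_conjTranspose_same A

end Stmt8Aux

set_option maxHeartbeats 2000000 in
/-- Matrix-perturbation bound for the dual SDP: if `Δ Δᵀ ⪯ r V⁻¹`,
`P ⪰ 0` and `μ ≥ r + (1+r) ‖X‖ ‖V‖^{1/2}`, then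
`-μ ‖P‖_* V⁻¹ ⪯ (X+Δ) P (X+Δ)ᵀ - X P Xᵀ ⪯ μ ‖P‖_* V⁻¹`
(for positive semidefinite `P` the trace norm `‖P‖_*` equals `Tr P`). -/
theorem stmt8 (d n : ℕ) (hd : 0 < d) (hn : 0 < n)
    (X Δ : Matrix (Fin d) (Fin n) ℝ)
    (V : Matrix (Fin d) (Fin d) ℝ) (hV : V.PosDef)
    (r : ℝ) (hr : 0 ≤ r) (hΔ : (r • V⁻¹ - Δ * Δᵀ).PosSemidef)
    (P : Matrix (Fin n) (Fin n) ℝ) (hP : P.PosSemidef)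
    (μ : ℝ) (hμ : r + (1 + r) * opNorm X * Real.sqrt (opNorm V) ≤ μ) :
    (((X + Δ) * P * (X + Δ)ᵀ - X * P * Xᵀ) - (-((μ * P.trace) • V⁻¹))).PosSemidef ∧
    ((μ * P.trace) • V⁻¹ - ((X + Δ) * P * (X + Δ)ᵀ - X * P * Xᵀ)).PosSemidef := by
  classical
  simp only [← conjTranspose_eq_transpose_of_trivial] at hΔ ⊢
  set t := P.trace with htdef
  clear_value t
  have ht0 : 0 ≤ t := by
    rw [htdef]
    unfold Matrix.trace
    refine Finset.sum_nonneg fun i _ => ?_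
    have h := hP.dotProduct_mulVec_nonneg (Pi.single i 1)
    simpa [dotProduct, Matrix.mulVec, Pi.single_apply] using h
  have hWpsd : (V⁻¹).PosSemidef := hV.inv.posSemidef
  have hWH : (V⁻¹)ᴴ = V⁻¹ := hV.1.inv
  set c := opNorm V with hcdef
  clear_value c
  have hc0 : (0:ℝ) ≤ c := by rw [hcdef]; exact norm_nonneg _
  have hVle : (c • (1 : Matrix (Fin d) (Fin d) ℝ) - V).PosSemidef := by
    rw [hcdef]; exact Stmt8Aux.psd_opNorm_smul_one_sub hV.1
  have hcpos : 0 < c := by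
    set e : Fin d → ℝ := Pi.single ⟨0, hd⟩ 1 with he
    have hne : e ≠ 0 := by
      intro h
      have := congrFun h ⟨0, hd⟩
      simp [he, Pi.single_eq_same] at this
    have hepos : 0 < e ⬝ᵥ (V *ᵥ e) := by
      have := hV.dotProduct_mulVec_pos hne
      simpa using this
    have hee : e ⬝ᵥ e = 1 := by simp [he, dotProduct, Pi.single_apply]
    have hle := hVle.dotProduct_mulVec_nonneg e
    rw [Stmt8Aux.dot_quad_eq, Matrix.sub_mulVec, dotProduct_sub, smul_mulVec,
      Matrix.one_mulVec, dotProduct_smul, smul_eq_mul, hee, mul_one] at hle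
    linarith
  have hdet : IsUnit V.det := isUnit_iff_ne_zero.mpr hV.det_pos.ne'
  have hWV : V⁻¹ * V = 1 := Matrix.nonsing_inv_mul V hdet
  have hVW : V * V⁻¹ = 1 := Matrix.mul_nonsing_inv V hdet
  obtain ⟨S, hSH, hSS⟩ : ∃ S : Matrix (Fin d) (Fin d) ℝ, Sᴴ = S ∧ S * S = V :=
    Stmt8Aux.exists_sqrt hV.posSemidef
  have h1 : (c • V - V * V).PosSemidef := by
    have h := hVle.mul_mul_conjTranspose_same S
    have heq : S * (c • (1 : Matrix (Fin d) (Fin d) ℝ) - V) * Sᴴ = c • V - V * V := by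
      rw [hSH]
      simp only [Matrix.mul_sub, Matrix.sub_mul, Matrix.mul_smul, Matrix.smul_mul, Matrix.mul_one]
      rw [hSS]
      congr 1
      rw [← hSS]
      noncomm_ring
    rwa [heq] at h
  have hCW : (c • V⁻¹ - 1).PosSemidef := by
    have h := h1.mul_mul_conjTranspose_same V⁻¹
    have heq : V⁻¹ * (c • V - V * V) * (V⁻¹)ᴴ = c • V⁻¹ - 1 := by
      rw [hWH]
      simp only [Matrix.mul_sub, Matrix.sub_mul, Matrix.mul_smul, Matrix.smul_mul]
      congr 1
      · rw [hWV, Matrix.one_mul]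
      · rw [← Matrix.mul_assoc, hWV, Matrix.one_mul, hVW]
    rwa [heq] at h
  have hXq : ((opNorm X ^ 2) • (1 : Matrix (Fin d) (Fin d) ℝ) - X * Xᴴ).PosSemidef :=
    Stmt8Aux.psd_opNorm_sq_smul_one_sub X
  have htr : (t • (1 : Matrix (Fin n) (Fin n) ℝ) - P).PosSemidef := by
    rw [htdef]; exact Stmt8Aux.psd_trace_smul_one_sub hP
  have hcongr : ∀ A : Matrix (Fin d) (Fin n) ℝ, (t • (A * Aᴴ) - A * P * Aᴴ).PosSemidef := by
    intro A
    have h := htr.mul_mul_conjTranspose_same A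
    have heq : A * (t • (1 : Matrix (Fin n) (Fin n) ℝ) - P) * Aᴴ
        = t • (A * Aᴴ) - A * P * Aᴴ := by
      simp only [Matrix.mul_sub, Matrix.sub_mul, Matrix.mul_smul, Matrix.smul_mul, Matrix.mul_one]
    rwa [heq] at h
  have hXPX := hcongr X
  have hΔPΔ := hcongr Δ
  have hDPD : ((r * t) • V⁻¹ - Δ * P * Δᴴ).PosSemidef := by
    have hDD : ((r * t) • V⁻¹ - t • (Δ * Δᴴ)).PosSemidef := by
      have h := Stmt8Aux.psd_smul hΔ ht0
      have heq : t • (r • V⁻¹ - Δ * Δᴴ) = (r * t) • V⁻¹ - t • (Δ * Δᴴ) := by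
        rw [smul_sub, smul_smul, mul_comm]
      rwa [heq] at h
    have h := hDD.add hΔPΔ
    have heq : ((r * t) • V⁻¹ - t • (Δ * Δᴴ)) + (t • (Δ * Δᴴ) - Δ * P * Δᴴ)
        = (r * t) • V⁻¹ - Δ * P * Δᴴ := by abel
    rwa [heq] at h
  have hXPW : ((opNorm X ^ 2 * c * t) • V⁻¹ - X * P * Xᴴ).PosSemidef := by
    have hA := Stmt8Aux.psd_smul hXq ht0
    have hB := Stmt8Aux.psd_smul hCW (mul_nonneg (sq_nonneg (opNorm X)) ht0)
    have h := (hB.add hA).add hXPX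
    have heq : (opNorm X ^ 2 * t) • (c • V⁻¹ - 1)
        + t • ((opNorm X ^ 2) • (1 : Matrix (Fin d) (Fin d) ℝ) - X * Xᴴ)
        + (t • (X * Xᴴ) - X * P * Xᴴ)
        = (opNorm X ^ 2 * c * t) • V⁻¹ - X * P * Xᴴ := by
      match_scalars <;> ring
    rwa [heq] at h
  have hexp : (X + Δ) * P * (X + Δ)ᴴ
      = X * P * Xᴴ + (X * P * Δᴴ + Δ * P * Xᴴ) + Δ * P * Δᴴ := by
    simp only [conjTranspose_add, Matrix.add_mul, Matrix.mul_add]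
    abel
  have hcross : ∀ ε : ℝ, 0 < ε →
      (ε • (X * P * Xᴴ) + (X * P * Δᴴ + Δ * P * Xᴴ) + ε⁻¹ • (Δ * P * Δᴴ)).PosSemidef ∧
      (ε • (X * P * Xᴴ) - (X * P * Δᴴ + Δ * P * Xᴴ) + ε⁻¹ • (Δ * P * Δᴴ)).PosSemidef := by
    intro ε hε
    set a := Real.sqrt ε with ha
    have ha0 : 0 < a := Real.sqrt_pos.mpr hε
    have ha' : a ≠ 0 := ha0.ne'
    have ha2 : a ^ 2 = ε := Real.sq_sqrt hε.le
    constructor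
    · have h := hP.mul_mul_conjTranspose_same (a • X + a⁻¹ • Δ)
      have heq : (a • X + a⁻¹ • Δ) * P * (a • X + a⁻¹ • Δ)ᴴ
          = ε • (X * P * Xᴴ) + (X * P * Δᴴ + Δ * P * Xᴴ) + ε⁻¹ • (Δ * P * Δᴴ) := by
        rw [← ha2]
        simp only [conjTranspose_add, conjTranspose_smul, star_trivial, Matrix.add_mul,
          Matrix.mul_add, Matrix.smul_mul, Matrix.mul_smul, smul_smul]
        match_scalars <;> field_simp <;> ring
      rwa [heq] at h
    · have h := hP.mul_mul_conjTranspose_same (a • X - a⁻¹ • Δ)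
      have heq : (a • X - a⁻¹ • Δ) * P * (a • X - a⁻¹ • Δ)ᴴ
          = ε • (X * P * Xᴴ) - (X * P * Δᴴ + Δ * P * Xᴴ) + ε⁻¹ • (Δ * P * Δᴴ) := by
        rw [← ha2]
        simp only [conjTranspose_sub, conjTranspose_smul, star_trivial, Matrix.sub_mul,
          Matrix.mul_sub, Matrix.smul_mul, Matrix.mul_smul, smul_smul]
        match_scalars <;> field_simp <;> ring
      rwa [heq] at h
  have hs0 : (0:ℝ) ≤ opNorm X * Real.sqrt c := mul_nonneg (norm_nonneg _) (Real.sqrt_nonneg _)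
  have hrμ : r ≤ μ := by nlinarith [hs0, hr, hμ]
  by_cases hX : opNorm X = 0
  · -- X = 0 case
    have hX0 : X = 0 := by
      have h1 : LinearMap.toContinuousLinearMap (Matrix.toEuclideanLin X) = 0 :=
        norm_eq_zero.mp hX
      have h2 : Matrix.toEuclideanLin X = 0 := by
        have hco := congrArg DFunLike.coe h1
        rw [LinearMap.coe_toContinuousLinearMap'] at hco
        exact LinearMap.ext fun v => by simpa using congrFun hco v
      have := Matrix.toEuclideanLin.injective (h2.trans (map_zero _).symm)
      simpa using this
    subst hX0
    constructor
    · have h := (hP.mul_mul_conjTranspose_same Δ).add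
        (Stmt8Aux.psd_smul hWpsd (mul_nonneg (hr.trans hrμ) ht0))
      simp only [zero_add, Matrix.zero_mul, sub_zero, sub_neg_eq_add]
      exact h
    · have h := (Stmt8Aux.psd_smul hWpsd (mul_nonneg (sub_nonneg.mpr hrμ) ht0)).add hDPD
      simp only [zero_add, Matrix.zero_mul, sub_zero]
      have heq : ((μ - r) * t) • V⁻¹ + ((r * t) • V⁻¹ - Δ * P * Δᴴ)
          = (μ * t) • V⁻¹ - Δ * P * Δᴴ := by
        match_scalars <;> ring
      rwa [heq] at h
  · -- X ≠ 0 case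
    have hXpos : 0 < opNorm X := lt_of_le_of_ne (norm_nonneg _) (Ne.symm hX)
    have hspos : 0 < opNorm X * Real.sqrt c := mul_pos hXpos (Real.sqrt_pos.mpr hcpos)
    set s : ℝ := opNorm X * Real.sqrt c with hsdef
    clear_value s
    have hμ' : r + (1 + r) * s ≤ μ := by
      have : r + (1 + r) * s = r + (1 + r) * opNorm X * Real.sqrt c := by rw [hsdef]; ring
      linarith [hμ, this.ge, this.le]
    have hs2 : s ^ 2 = opNorm X ^ 2 * c := by
      rw [hsdef, mul_pow, Real.sq_sqrt hc0]
    set ε : ℝ := (1 + r) / (2 * s) with hεdef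
    clear_value ε
    have h1r : (0:ℝ) < 1 + r := by linarith
    have hεpos : 0 < ε := by
      rw [hεdef]
      positivity
    have key : ε * (opNorm X ^ 2 * c) + (1 + ε⁻¹) * r ≤ μ := by
      have hsne : s ≠ 0 := hspos.ne'
      have h3 : ε * s ^ 2 + (1 + ε⁻¹) * r - (r + (1 + r) * s)
          = -(((1 - r) ^ 2 * s) / (2 * (1 + r))) := by
        rw [hεdef]
        field_simp
        ring
      have h4 : 0 ≤ ((1 - r) ^ 2 * s) / (2 * (1 + r)) := by positivity
      rw [← hs2]
      linarith [h3, h4, hμ']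
    obtain ⟨hcp, hcm⟩ := hcross ε hεpos
    have hεinv0 : (0:ℝ) ≤ ε⁻¹ := (inv_pos.mpr hεpos).le
    have keyQ : (ε * (opNorm X ^ 2 * c) + (1 + ε⁻¹) * r) * t ≤ μ * t :=
      mul_le_mul_of_nonneg_right key ht0
    have keyQ1 : (ε * (opNorm X ^ 2 * c) + ε⁻¹ * r) * t ≤ μ * t := by
      have h5 : (ε * (opNorm X ^ 2 * c) + ε⁻¹ * r) * t
          ≤ (ε * (opNorm X ^ 2 * c) + (1 + ε⁻¹) * r) * t := by
        apply mul_le_mul_of_nonneg_right _ ht0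
        nlinarith [hr]
      linarith
    constructor
    · have h := (((Stmt8Aux.psd_smul hXPW hεpos.le).add
          (Stmt8Aux.psd_smul hDPD hεinv0)).add hcp).add
        ((hP.mul_mul_conjTranspose_same Δ).add
          (Stmt8Aux.psd_smul hWpsd (sub_nonneg.mpr keyQ1)))
      have heq : ε • ((opNorm X ^ 2 * c * t) • V⁻¹ - X * P * Xᴴ)
          + ε⁻¹ • ((r * t) • V⁻¹ - Δ * P * Δᴴ)
          + (ε • (X * P * Xᴴ) + (X * P * Δᴴ + Δ * P * Xᴴ) + ε⁻¹ • (Δ * P * Δᴴ))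
          + (Δ * P * Δᴴ + (μ * t - (ε * (opNorm X ^ 2 * c) + ε⁻¹ * r) * t) • V⁻¹)
          = ((X + Δ) * P * (X + Δ)ᴴ - X * P * Xᴴ) - -((μ * t) • V⁻¹) := by
        rw [hexp]
        match_scalars <;> ring
      rwa [heq] at h
    · have h := (((Stmt8Aux.psd_smul hXPW hεpos.le).add
          (Stmt8Aux.psd_smul hDPD (by linarith : (0:ℝ) ≤ 1 + ε⁻¹))).add hcm).add
        (Stmt8Aux.psd_smul hWpsd (sub_nonneg.mpr keyQ))
      have heq : ε • ((opNorm X ^ 2 * c * t) • V⁻¹ - X * P * Xᴴ)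
          + (1 + ε⁻¹) • ((r * t) • V⁻¹ - Δ * P * Δᴴ)
          + (ε • (X * P * Xᴴ) - (X * P * Δᴴ + Δ * P * Xᴴ) + ε⁻¹ • (Δ * P * Δᴴ))
          + (μ * t - (ε * (opNorm X ^ 2 * c) + (1 + ε⁻¹) * r) * t) • V⁻¹
          = (μ * t) • V⁻¹ - ((X + Δ) * P * (X + Δ)ᴴ - X * P * Xᴴ) := by
        rw [hexp]
        match_scalars <;> ring
      rwa [heq] at h
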